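/- Let Φ(x) = (2π)^{−1/2} ∫_{−∞}^x e^{−t²/2} dt and φ(x) = (2π)^{−1/2} e^{−x²/2}. Then for every x ∈ [−3, 0), φ(x)/Φ(x) ≤ 3.284. -/

import Mathlib

namespace Stmt12

/-- The standard normal cumulative distribution function
`Φ(x) = (2π)^{-1/2} ∫_{-∞}^x e^{-t²/2} dt`. -/
noncomputable def Phi (x : ℝ) : ℝ :=
  (2 * Real.pi) ^ (-(1 / 2) : ℝ) * ∫ t in Set.Iic x, Real.exp (-t ^ 2 / 2)

/-- The standard normal density `φ(x) = (2π)^{-1/2} e^{-x²/2}`. -/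
noncomputable def phi (x : ℝ) : ℝ :=
  (2 * Real.pi) ^ (-(1 / 2) : ℝ) * Real.exp (-x ^ 2 / 2)



-- generic "nonneg from derivative" helper
lemma deriv_aux {g g' : ℝ → ℝ} (hd : ∀ y, HasDerivAt g (g' y) y)
    (hg' : ∀ y, y ≤ 0 → g' y ≤ 0) (h0 : g 0 = 0) {x : ℝ} (hx : x ≤ 0) : 0 ≤ g x := by
  have hA : AntitoneOn g (Set.Iic 0) := by
    apply antitoneOn_of_deriv_nonpos (convex_Iic 0)
    · exact fun y _ => (hd y).continuousAt.continuousWithinAt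
    · intro y hy
      exact (hd y).differentiableAt.differentiableWithinAt
    · intro y hy
      rw [interior_Iic] at hy
      rw [(hd y).deriv]
      exact hg' y hy.le
  have h := hA (Set.mem_Iic.2 hx) (Set.mem_Iic.2 le_rfl) hx
  rw [h0] at h
  exact h

lemma exp_le2 {x : ℝ} (hx : x ≤ 0) : Real.exp x ≤ 1 + x^1 + x^2/2 := by
  have h := deriv_aux (g := fun y : ℝ => 1 + y^1 + y^2/2 - Real.exp y)
      (g' := fun y : ℝ => 1 + y^1/1 - Real.exp y) ?_ ?_ (by norm_num) hx
  · linarith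
  · intro y
    have H := (((hasDerivAt_const y (1:ℝ)).add (hasDerivAt_pow 1 y)).add
      ((hasDerivAt_pow 2 y).div_const 2)).sub (Real.hasDerivAt_exp y)
    refine H.congr_deriv ?_
    push_cast
    ring
  · intro y hy
    have := Real.add_one_le_exp y
    simp only [pow_one]
    linarith

lemma exp_ge3 {x : ℝ} (hx : x ≤ 0) : 1 + x^1 + x^2/2 + x^3/6 ≤ Real.exp x := by
  have h := deriv_aux (g := fun y : ℝ => Real.exp y - (1 + y^1 + y^2/2 + y^3/6))
      (g' := fun y : ℝ => Real.exp y - (1 + y^1 + y^2/2)) ?_ ?_ (by norm_num) hx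
  · linarith
  · intro y
    have H := (Real.hasDerivAt_exp y).sub ((((hasDerivAt_const y (1:ℝ)).add (hasDerivAt_pow 1 y)).add ((hasDerivAt_pow 2 y).div_const 2)).add ((hasDerivAt_pow 3 y).div_const 6))
    refine H.congr_deriv ?_
    push_cast
    ring
  · intro y hy
    have := exp_le2 hy
    linarith

lemma exp_le4 {x : ℝ} (hx : x ≤ 0) : Real.exp x ≤ 1 + x^1 + x^2/2 + x^3/6 + x^4/24 := by
  have h := deriv_aux (g := fun y : ℝ => (1 + y^1 + y^2/2 + y^3/6 + y^4/24) - Real.exp y)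
      (g' := fun y : ℝ => (1 + y^1 + y^2/2 + y^3/6) - Real.exp y) ?_ ?_ (by norm_num) hx
  · linarith
  · intro y
    have H := (((((hasDerivAt_const y (1:ℝ)).add (hasDerivAt_pow 1 y)).add ((hasDerivAt_pow 2 y).div_const 2)).add ((hasDerivAt_pow 3 y).div_const 6)).add ((hasDerivAt_pow 4 y).div_const 24)).sub (Real.hasDerivAt_exp y)
    refine H.congr_deriv ?_
    push_cast
    ring
  · intro y hy
    have := exp_ge3 hy
    linarith

lemma exp_ge5 {x : ℝ} (hx : x ≤ 0) : 1 + x^1 + x^2/2 + x^3/6 + x^4/24 + x^5/120 ≤ Real.exp x := by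
  have h := deriv_aux (g := fun y : ℝ => Real.exp y - (1 + y^1 + y^2/2 + y^3/6 + y^4/24 + y^5/120))
      (g' := fun y : ℝ => Real.exp y - (1 + y^1 + y^2/2 + y^3/6 + y^4/24)) ?_ ?_ (by norm_num) hx
  · linarith
  · intro y
    have H := (Real.hasDerivAt_exp y).sub ((((((hasDerivAt_const y (1:ℝ)).add (hasDerivAt_pow 1 y)).add ((hasDerivAt_pow 2 y).div_const 2)).add ((hasDerivAt_pow 3 y).div_const 6)).add ((hasDerivAt_pow 4 y).div_const 24)).add ((hasDerivAt_pow 5 y).div_const 120))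
    refine H.congr_deriv ?_
    push_cast
    ring
  · intro y hy
    have := exp_le4 hy
    linarith

lemma exp_le6 {x : ℝ} (hx : x ≤ 0) : Real.exp x ≤ 1 + x^1 + x^2/2 + x^3/6 + x^4/24 + x^5/120 + x^6/720 := by
  have h := deriv_aux (g := fun y : ℝ => (1 + y^1 + y^2/2 + y^3/6 + y^4/24 + y^5/120 + y^6/720) - Real.exp y)
      (g' := fun y : ℝ => (1 + y^1 + y^2/2 + y^3/6 + y^4/24 + y^5/120) - Real.exp y) ?_ ?_ (by norm_num) hx
  · linarith
  · intro y
    have H := (((((((hasDerivAt_const y (1:ℝ)).add (hasDerivAt_pow 1 y)).add ((hasDerivAt_pow 2 y).div_const 2)).add ((hasDerivAt_pow 3 y).div_const 6)).add ((hasDerivAt_pow 4 y).div_const 24)).add ((hasDerivAt_pow 5 y).div_const 120)).add ((hasDerivAt_pow 6 y).div_const 720)).sub (Real.hasDerivAt_exp y)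
    refine H.congr_deriv ?_
    push_cast
    ring
  · intro y hy
    have := exp_ge5 hy
    linarith

lemma exp_ge7 {x : ℝ} (hx : x ≤ 0) : 1 + x^1 + x^2/2 + x^3/6 + x^4/24 + x^5/120 + x^6/720 + x^7/5040 ≤ Real.exp x := by
  have h := deriv_aux (g := fun y : ℝ => Real.exp y - (1 + y^1 + y^2/2 + y^3/6 + y^4/24 + y^5/120 + y^6/720 + y^7/5040))
      (g' := fun y : ℝ => Real.exp y - (1 + y^1 + y^2/2 + y^3/6 + y^4/24 + y^5/120 + y^6/720)) ?_ ?_ (by norm_num) hx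
  · linarith
  · intro y
    have H := (Real.hasDerivAt_exp y).sub ((((((((hasDerivAt_const y (1:ℝ)).add (hasDerivAt_pow 1 y)).add ((hasDerivAt_pow 2 y).div_const 2)).add ((hasDerivAt_pow 3 y).div_const 6)).add ((hasDerivAt_pow 4 y).div_const 24)).add ((hasDerivAt_pow 5 y).div_const 120)).add ((hasDerivAt_pow 6 y).div_const 720)).add ((hasDerivAt_pow 7 y).div_const 5040))
    refine H.congr_deriv ?_
    push_cast
    ring
  · intro y hy
    have := exp_le6 hy
    linarith

lemma exp_ge7' {x : ℝ} (hx : x ≤ 0) :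
    1 + x + x^2/2 + x^3/6 + x^4/24 + x^5/120 + x^6/720 + x^7/5040 ≤ Real.exp x := by
  have := exp_ge7 hx
  rw [pow_one] at this
  linarith



lemma exp_neg_lb (q r L : ℝ) (K : ℕ) (hq : r - K = -q) (hr : 0 ≤ r) (hL : 0 ≤ L)
    (hLS : L * (2.7182818286:ℝ)^K ≤ ∑ i ∈ Finset.range 13, r^i / (Nat.factorial i : ℝ)) :
    L ≤ Real.exp (-q) := by
  have hsum : (∑ i ∈ Finset.range 13, r^i / (Nat.factorial i : ℝ)) ≤ Real.exp r :=
    Real.sum_le_exp_of_nonneg hr 13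
  have he1 : Real.exp 1 ≤ 2.7182818286 := Real.exp_one_lt_d9.le
  have hKpow : Real.exp 1 ^ K ≤ (2.7182818286:ℝ)^K :=
    pow_le_pow_left₀ (Real.exp_pos 1).le he1 K
  have hEpos : (0:ℝ) < Real.exp 1 ^ K := pow_pos (Real.exp_pos 1) K
  have hexp : Real.exp (-q) = Real.exp r / Real.exp 1 ^ K := by
    rw [← Real.exp_nat_mul, ← Real.exp_sub, mul_one, hq]
  rw [hexp, le_div_iff₀ hEpos]
  calc L * Real.exp 1 ^ K ≤ L * (2.7182818286:ℝ)^K := by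
        exact mul_le_mul_of_nonneg_left hKpow hL
    _ ≤ _ := hLS
    _ ≤ Real.exp r := hsum


lemma int_poly (a b c0 c2 c4 c6 c8 c10 c12 c14 : ℝ) :
    (∫ t in a..b, (c0 + c2*t^2 + c4*t^4 + c6*t^6 + c8*t^8 + c10*t^10 + c12*t^12 + c14*t^14)) =
    c0*(b-a) + c2*(b^3-a^3)/3 + c4*(b^5-a^5)/5 + c6*(b^7-a^7)/7 + c8*(b^9-a^9)/9
      + c10*(b^11-a^11)/11 + c12*(b^13-a^13)/13 + c14*(b^15-a^15)/15 := by
  have hd : ∀ t : ℝ, HasDerivAt (fun y : ℝ => c0*y^1 + c2/3*y^3 + c4/5*y^5 + c6/7*y^7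
      + c8/9*y^9 + c10/11*y^11 + c12/13*y^13 + c14/15*y^15)
      (c0 + c2*t^2 + c4*t^4 + c6*t^6 + c8*t^8 + c10*t^10 + c12*t^12 + c14*t^14) t := by
    intro t
    have H := ((((((((hasDerivAt_pow 1 t).const_mul c0).add
      ((hasDerivAt_pow 3 t).const_mul (c2/3))).add
      ((hasDerivAt_pow 5 t).const_mul (c4/5))).add
      ((hasDerivAt_pow 7 t).const_mul (c6/7))).add
      ((hasDerivAt_pow 9 t).const_mul (c8/9))).add
      ((hasDerivAt_pow 11 t).const_mul (c10/11))).add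
      ((hasDerivAt_pow 13 t).const_mul (c12/13))).add
      ((hasDerivAt_pow 15 t).const_mul (c14/15))
    refine H.congr_deriv ?_
    push_cast
    ring
  rw [intervalIntegral.integral_eq_sub_of_hasDerivAt (fun t _ => hd t)
    (Continuous.intervalIntegrable (by fun_prop) _ _)]
  ring


lemma hii : ∀ a b : ℝ, IntervalIntegrable (fun t : ℝ => Real.exp (-t^2/2))
    MeasureTheory.volume a b := fun a b => Continuous.intervalIntegrable (by fun_prop) a b

lemma hpiece0 : (517427105179/500000000000000000:ℝ) * (34224679321291453/247637506365849600:ℝ) ≤ ∫ t in (-11/2:ℝ)..(-21/4:ℝ), Real.exp (-t^2/2) := by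
  have hE : (517427105179/500000000000000000:ℝ) ≤ Real.exp (-((-21/4:ℝ))^2/2) := by
    have h := exp_neg_lb (441/32:ℝ) (7/32:ℝ) (517427105179/500000000000000000:ℝ) 14 (by norm_num) (by norm_num) (by norm_num)
      (by norm_num [Finset.sum_range_succ, Nat.factorial])
    convert h using 2
    norm_num
  have key : ∀ t ∈ Set.Icc ((-11/2:ℝ)) ((-21/4:ℝ)),
      Real.exp (-((-21/4:ℝ))^2/2) * (1 + (((441/16:ℝ) - t^2)/2) + (((441/16:ℝ) - t^2)/2)^2/2 + (((441/16:ℝ) - t^2)/2)^3/6 + (((441/16:ℝ) - t^2)/2)^4/24 + (((441/16:ℝ) - t^2)/2)^5/120 + (((441/16:ℝ) - t^2)/2)^6/720 + (((441/16:ℝ) - t^2)/2)^7/5040) ≤ Real.exp (-t^2/2) := by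
    intro t ht
    have h1 : ((-21/4:ℝ))^2 ≤ t^2 := by nlinarith [ht.1, ht.2]
    have h2 : (((441/16:ℝ) - t^2)/2) ≤ 0 := by nlinarith
    have h3 := exp_ge7' h2
    calc Real.exp (-((-21/4:ℝ))^2/2) * (1 + (((441/16:ℝ) - t^2)/2) + (((441/16:ℝ) - t^2)/2)^2/2 + (((441/16:ℝ) - t^2)/2)^3/6 + (((441/16:ℝ) - t^2)/2)^4/24 + (((441/16:ℝ) - t^2)/2)^5/120 + (((441/16:ℝ) - t^2)/2)^6/720 + (((441/16:ℝ) - t^2)/2)^7/5040)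
        ≤ Real.exp (-((-21/4:ℝ))^2/2) * Real.exp (((441/16:ℝ) - t^2)/2) :=
          mul_le_mul_of_nonneg_left h3 (Real.exp_pos _).le
      _ = Real.exp (-t^2/2) := by
          rw [← Real.exp_add]; congr 1; ring
  have hmono := intervalIntegral.integral_mono_on (by norm_num : ((-11/2:ℝ)) ≤ (-21/4:ℝ))
    (Continuous.intervalIntegrable (by fun_prop) _ _) (hii _ _) key
  have hcg : (∫ t in (-11/2:ℝ)..(-21/4:ℝ), (1 + (((441/16:ℝ) - t^2)/2) + (((441/16:ℝ) - t^2)/2)^2/2 + (((441/16:ℝ) - t^2)/2)^3/6 + (((441/16:ℝ) - t^2)/2)^4/24 + (((441/16:ℝ) - t^2)/2)^5/120 + (((441/16:ℝ) - t^2)/2)^6/720 + (((441/16:ℝ) - t^2)/2)^7/5040)) =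
      ∫ t in (-11/2:ℝ)..(-21/4:ℝ), ((94663665204576151/2748779069440:ℝ) + (-1349152269527177/171798691840:ℝ)*t^2 + (8309970337427/10737418240:ℝ)*t^4 + (-17187562571/402653184:ℝ)*t^6 + (35780803/25165824:ℝ)*t^8 + (-224753/7864320:ℝ)*t^10 + (473/1474560:ℝ)*t^12 + (-1/645120:ℝ)*t^14) :=
    intervalIntegral.integral_congr (fun t _ => by ring)
  have hval : (∫ t in (-11/2:ℝ)..(-21/4:ℝ), Real.exp (-((-21/4:ℝ))^2/2) * (1 + (((441/16:ℝ) - t^2)/2) + (((441/16:ℝ) - t^2)/2)^2/2 + (((441/16:ℝ) - t^2)/2)^3/6 + (((441/16:ℝ) - t^2)/2)^4/24 + (((441/16:ℝ) - t^2)/2)^5/120 + (((441/16:ℝ) - t^2)/2)^6/720 + (((441/16:ℝ) - t^2)/2)^7/5040))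
      = Real.exp (-((-21/4:ℝ))^2/2) * (34224679321291453/247637506365849600:ℝ) := by
    rw [intervalIntegral.integral_const_mul, hcg, int_poly]
    norm_num
  have hLE : (517427105179/500000000000000000:ℝ) * (34224679321291453/247637506365849600:ℝ) ≤ Real.exp (-((-21/4:ℝ))^2/2) * (34224679321291453/247637506365849600:ℝ) :=
    mul_le_mul_of_nonneg_right hE (by norm_num)
  linarith [hmono, hval, hLE]

lemma hpiece1 : (1863326584783/500000000000000000:ℝ) * (90200915894702993/636782159226470400:ℝ) ≤ ∫ t in (-21/4:ℝ)..(-5:ℝ), Real.exp (-t^2/2) := by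
  have hE : (1863326584783/500000000000000000:ℝ) ≤ Real.exp (-((-5:ℝ))^2/2) := by
    have h := exp_neg_lb (25/2:ℝ) (1/2:ℝ) (1863326584783/500000000000000000:ℝ) 13 (by norm_num) (by norm_num) (by norm_num)
      (by norm_num [Finset.sum_range_succ, Nat.factorial])
    convert h using 2
    norm_num
  have key : ∀ t ∈ Set.Icc ((-21/4:ℝ)) ((-5:ℝ)),
      Real.exp (-((-5:ℝ))^2/2) * (1 + (((25:ℝ) - t^2)/2) + (((25:ℝ) - t^2)/2)^2/2 + (((25:ℝ) - t^2)/2)^3/6 + (((25:ℝ) - t^2)/2)^4/24 + (((25:ℝ) - t^2)/2)^5/120 + (((25:ℝ) - t^2)/2)^6/720 + (((25:ℝ) - t^2)/2)^7/5040) ≤ Real.exp (-t^2/2) := by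
    intro t ht
    have h1 : ((-5:ℝ))^2 ≤ t^2 := by nlinarith [ht.1, ht.2]
    have h2 : (((25:ℝ) - t^2)/2) ≤ 0 := by nlinarith
    have h3 := exp_ge7' h2
    calc Real.exp (-((-5:ℝ))^2/2) * (1 + (((25:ℝ) - t^2)/2) + (((25:ℝ) - t^2)/2)^2/2 + (((25:ℝ) - t^2)/2)^3/6 + (((25:ℝ) - t^2)/2)^4/24 + (((25:ℝ) - t^2)/2)^5/120 + (((25:ℝ) - t^2)/2)^6/720 + (((25:ℝ) - t^2)/2)^7/5040)
        ≤ Real.exp (-((-5:ℝ))^2/2) * Real.exp (((25:ℝ) - t^2)/2) :=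
          mul_le_mul_of_nonneg_left h3 (Real.exp_pos _).le
      _ = Real.exp (-t^2/2) := by
          rw [← Real.exp_add]; congr 1; ring
  have hmono := intervalIntegral.integral_mono_on (by norm_num : ((-21/4:ℝ)) ≤ (-5:ℝ))
    (Continuous.intervalIntegrable (by fun_prop) _ _) (hii _ _) key
  have hcg : (∫ t in (-21/4:ℝ)..(-5:ℝ), (1 + (((25:ℝ) - t^2)/2) + (((25:ℝ) - t^2)/2)^2/2 + (((25:ℝ) - t^2)/2)^3/6 + (((25:ℝ) - t^2)/2)^4/24 + (((25:ℝ) - t^2)/2)^5/120 + (((25:ℝ) - t^2)/2)^6/720 + (((25:ℝ) - t^2)/2)^7/5040)) =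
      ∫ t in (-21/4:ℝ)..(-5:ℝ), ((268610411/14336:ℝ) + (-85485041/18432:ℝ)*t^2 + (3054743/6144:ℝ)*t^4 + (-61201/2048:ℝ)*t^6 + (20023/18432:ℝ)*t^8 + (-733/30720:ℝ)*t^10 + (3/10240:ℝ)*t^12 + (-1/645120:ℝ)*t^14) :=
    intervalIntegral.integral_congr (fun t _ => by ring)
  have hval : (∫ t in (-21/4:ℝ)..(-5:ℝ), Real.exp (-((-5:ℝ))^2/2) * (1 + (((25:ℝ) - t^2)/2) + (((25:ℝ) - t^2)/2)^2/2 + (((25:ℝ) - t^2)/2)^3/6 + (((25:ℝ) - t^2)/2)^4/24 + (((25:ℝ) - t^2)/2)^5/120 + (((25:ℝ) - t^2)/2)^6/720 + (((25:ℝ) - t^2)/2)^7/5040))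
      = Real.exp (-((-5:ℝ))^2/2) * (90200915894702993/636782159226470400:ℝ) := by
    rw [intervalIntegral.integral_const_mul, hcg, int_poly]
    norm_num
  have hLE : (1863326584783/500000000000000000:ℝ) * (90200915894702993/636782159226470400:ℝ) ≤ Real.exp (-((-5:ℝ))^2/2) * (90200915894702993/636782159226470400:ℝ) :=
    mul_le_mul_of_nonneg_right hE (by norm_num)
  linarith [hmono, hval, hLE]

lemma hpiece2 : (12607105169189/1000000000000000000:ℝ) * (161835703604494727/1114368778646323200:ℝ) ≤ ∫ t in (-5:ℝ)..(-19/4:ℝ), Real.exp (-t^2/2) := by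
  have hE : (12607105169189/1000000000000000000:ℝ) ≤ Real.exp (-((-19/4:ℝ))^2/2) := by
    have h := exp_neg_lb (361/32:ℝ) (23/32:ℝ) (12607105169189/1000000000000000000:ℝ) 12 (by norm_num) (by norm_num) (by norm_num)
      (by norm_num [Finset.sum_range_succ, Nat.factorial])
    convert h using 2
    norm_num
  have key : ∀ t ∈ Set.Icc ((-5:ℝ)) ((-19/4:ℝ)),
      Real.exp (-((-19/4:ℝ))^2/2) * (1 + (((361/16:ℝ) - t^2)/2) + (((361/16:ℝ) - t^2)/2)^2/2 + (((361/16:ℝ) - t^2)/2)^3/6 + (((361/16:ℝ) - t^2)/2)^4/24 + (((361/16:ℝ) - t^2)/2)^5/120 + (((361/16:ℝ) - t^2)/2)^6/720 + (((361/16:ℝ) - t^2)/2)^7/5040) ≤ Real.exp (-t^2/2) := by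
    intro t ht
    have h1 : ((-19/4:ℝ))^2 ≤ t^2 := by nlinarith [ht.1, ht.2]
    have h2 : (((361/16:ℝ) - t^2)/2) ≤ 0 := by nlinarith
    have h3 := exp_ge7' h2
    calc Real.exp (-((-19/4:ℝ))^2/2) * (1 + (((361/16:ℝ) - t^2)/2) + (((361/16:ℝ) - t^2)/2)^2/2 + (((361/16:ℝ) - t^2)/2)^3/6 + (((361/16:ℝ) - t^2)/2)^4/24 + (((361/16:ℝ) - t^2)/2)^5/120 + (((361/16:ℝ) - t^2)/2)^6/720 + (((361/16:ℝ) - t^2)/2)^7/5040)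
        ≤ Real.exp (-((-19/4:ℝ))^2/2) * Real.exp (((361/16:ℝ) - t^2)/2) :=
          mul_le_mul_of_nonneg_left h3 (Real.exp_pos _).le
      _ = Real.exp (-t^2/2) := by
          rw [← Real.exp_add]; congr 1; ring
  have hmono := intervalIntegral.integral_mono_on (by norm_num : ((-5:ℝ)) ≤ (-19/4:ℝ))
    (Continuous.intervalIntegrable (by fun_prop) _ _) (hii _ _) key
  have hcg : (∫ t in (-5:ℝ)..(-19/4:ℝ), (1 + (((361/16:ℝ) - t^2)/2) + (((361/16:ℝ) - t^2)/2)^2/2 + (((361/16:ℝ) - t^2)/2)^3/6 + (((361/16:ℝ) - t^2)/2)^4/24 + (((361/16:ℝ) - t^2)/2)^5/120 + (((361/16:ℝ) - t^2)/2)^6/720 + (((361/16:ℝ) - t^2)/2)^7/5040)) =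
      ∫ t in (-5:ℝ)..(-19/4:ℝ), ((576642442424310611/57724360458240:ℝ) + (-4155895720937713/1546188226560:ℝ)*t^2 + (10117608343081/32212254720:ℝ)*t^4 + (-8305296011/402653184:ℝ)*t^6 + (61971289/75497472:ℝ)*t^8 + (-155473/7864320:ℝ)*t^10 + (131/491520:ℝ)*t^12 + (-1/645120:ℝ)*t^14) :=
    intervalIntegral.integral_congr (fun t _ => by ring)
  have hval : (∫ t in (-5:ℝ)..(-19/4:ℝ), Real.exp (-((-19/4:ℝ))^2/2) * (1 + (((361/16:ℝ) - t^2)/2) + (((361/16:ℝ) - t^2)/2)^2/2 + (((361/16:ℝ) - t^2)/2)^3/6 + (((361/16:ℝ) - t^2)/2)^4/24 + (((361/16:ℝ) - t^2)/2)^5/120 + (((361/16:ℝ) - t^2)/2)^6/720 + (((361/16:ℝ) - t^2)/2)^7/5040))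
      = Real.exp (-((-19/4:ℝ))^2/2) * (161835703604494727/1114368778646323200:ℝ) := by
    rw [intervalIntegral.integral_const_mul, hcg, int_poly]
    norm_num
  have hLE : (12607105169189/1000000000000000000:ℝ) * (161835703604494727/1114368778646323200:ℝ) ≤ Real.exp (-((-19/4:ℝ))^2/2) * (161835703604494727/1114368778646323200:ℝ) :=
    mul_le_mul_of_nonneg_right hE (by norm_num)
  linarith [hmono, hval, hLE]

lemma hpiece3 : (40065297369593/1000000000000000000:ℝ) * (2950576854055037/19811000509267968:ℝ) ≤ ∫ t in (-19/4:ℝ)..(-9/2:ℝ), Real.exp (-t^2/2) := by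
  have hE : (40065297369593/1000000000000000000:ℝ) ≤ Real.exp (-((-9/2:ℝ))^2/2) := by
    have h := exp_neg_lb (81/8:ℝ) (7/8:ℝ) (40065297369593/1000000000000000000:ℝ) 11 (by norm_num) (by norm_num) (by norm_num)
      (by norm_num [Finset.sum_range_succ, Nat.factorial])
    convert h using 2
    norm_num
  have key : ∀ t ∈ Set.Icc ((-19/4:ℝ)) ((-9/2:ℝ)),
      Real.exp (-((-9/2:ℝ))^2/2) * (1 + (((81/4:ℝ) - t^2)/2) + (((81/4:ℝ) - t^2)/2)^2/2 + (((81/4:ℝ) - t^2)/2)^3/6 + (((81/4:ℝ) - t^2)/2)^4/24 + (((81/4:ℝ) - t^2)/2)^5/120 + (((81/4:ℝ) - t^2)/2)^6/720 + (((81/4:ℝ) - t^2)/2)^7/5040) ≤ Real.exp (-t^2/2) := by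
    intro t ht
    have h1 : ((-9/2:ℝ))^2 ≤ t^2 := by nlinarith [ht.1, ht.2]
    have h2 : (((81/4:ℝ) - t^2)/2) ≤ 0 := by nlinarith
    have h3 := exp_ge7' h2
    calc Real.exp (-((-9/2:ℝ))^2/2) * (1 + (((81/4:ℝ) - t^2)/2) + (((81/4:ℝ) - t^2)/2)^2/2 + (((81/4:ℝ) - t^2)/2)^3/6 + (((81/4:ℝ) - t^2)/2)^4/24 + (((81/4:ℝ) - t^2)/2)^5/120 + (((81/4:ℝ) - t^2)/2)^6/720 + (((81/4:ℝ) - t^2)/2)^7/5040)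
        ≤ Real.exp (-((-9/2:ℝ))^2/2) * Real.exp (((81/4:ℝ) - t^2)/2) :=
          mul_le_mul_of_nonneg_left h3 (Real.exp_pos _).le
      _ = Real.exp (-t^2/2) := by
          rw [← Real.exp_add]; congr 1; ring
  have hmono := intervalIntegral.integral_mono_on (by norm_num : ((-19/4:ℝ)) ≤ (-9/2:ℝ))
    (Continuous.intervalIntegrable (by fun_prop) _ _) (hii _ _) key
  have hcg : (∫ t in (-19/4:ℝ)..(-9/2:ℝ), (1 + (((81/4:ℝ) - t^2)/2) + (((81/4:ℝ) - t^2)/2)^2/2 + (((81/4:ℝ) - t^2)/2)^3/6 + (((81/4:ℝ) - t^2)/2)^4/24 + (((81/4:ℝ) - t^2)/2)^5/120 + (((81/4:ℝ) - t^2)/2)^6/720 + (((81/4:ℝ) - t^2)/2)^7/5040)) =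
      ∫ t in (-19/4:ℝ)..(-9/2:ℝ), ((1226257062701/234881024:ℝ) + (-64096776521/41943040:ℝ)*t^2 + (2044732307/10485760:ℝ)*t^4 + (-22061771/1572864:ℝ)*t^6 + (241027/393216:ℝ)*t^8 + (-1597/98304:ℝ)*t^10 + (89/368640:ℝ)*t^12 + (-1/645120:ℝ)*t^14) :=
    intervalIntegral.integral_congr (fun t _ => by ring)
  have hval : (∫ t in (-19/4:ℝ)..(-9/2:ℝ), Real.exp (-((-9/2:ℝ))^2/2) * (1 + (((81/4:ℝ) - t^2)/2) + (((81/4:ℝ) - t^2)/2)^2/2 + (((81/4:ℝ) - t^2)/2)^3/6 + (((81/4:ℝ) - t^2)/2)^4/24 + (((81/4:ℝ) - t^2)/2)^5/120 + (((81/4:ℝ) - t^2)/2)^6/720 + (((81/4:ℝ) - t^2)/2)^7/5040))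
      = Real.exp (-((-9/2:ℝ))^2/2) * (2950576854055037/19811000509267968:ℝ) := by
    rw [intervalIntegral.integral_const_mul, hcg, int_poly]
    norm_num
  have hLE : (40065297369593/1000000000000000000:ℝ) * (2950576854055037/19811000509267968:ℝ) ≤ Real.exp (-((-9/2:ℝ))^2/2) * (2950576854055037/19811000509267968:ℝ) :=
    mul_le_mul_of_nonneg_right hE (by norm_num)
  linarith [hmono, hval, hLE]

lemma hpiece4 : (119612883513817/1000000000000000000:ℝ) * (340522407758457391/2228737557292646400:ℝ) ≤ ∫ t in (-9/2:ℝ)..(-17/4:ℝ), Real.exp (-t^2/2) := by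
  have hE : (119612883513817/1000000000000000000:ℝ) ≤ Real.exp (-((-17/4:ℝ))^2/2) := by
    have h := exp_neg_lb (289/32:ℝ) (31/32:ℝ) (119612883513817/1000000000000000000:ℝ) 10 (by norm_num) (by norm_num) (by norm_num)
      (by norm_num [Finset.sum_range_succ, Nat.factorial])
    convert h using 2
    norm_num
  have key : ∀ t ∈ Set.Icc ((-9/2:ℝ)) ((-17/4:ℝ)),
      Real.exp (-((-17/4:ℝ))^2/2) * (1 + (((289/16:ℝ) - t^2)/2) + (((289/16:ℝ) - t^2)/2)^2/2 + (((289/16:ℝ) - t^2)/2)^3/6 + (((289/16:ℝ) - t^2)/2)^4/24 + (((289/16:ℝ) - t^2)/2)^5/120 + (((289/16:ℝ) - t^2)/2)^6/720 + (((289/16:ℝ) - t^2)/2)^7/5040) ≤ Real.exp (-t^2/2) := by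
    intro t ht
    have h1 : ((-17/4:ℝ))^2 ≤ t^2 := by nlinarith [ht.1, ht.2]
    have h2 : (((289/16:ℝ) - t^2)/2) ≤ 0 := by nlinarith
    have h3 := exp_ge7' h2
    calc Real.exp (-((-17/4:ℝ))^2/2) * (1 + (((289/16:ℝ) - t^2)/2) + (((289/16:ℝ) - t^2)/2)^2/2 + (((289/16:ℝ) - t^2)/2)^3/6 + (((289/16:ℝ) - t^2)/2)^4/24 + (((289/16:ℝ) - t^2)/2)^5/120 + (((289/16:ℝ) - t^2)/2)^6/720 + (((289/16:ℝ) - t^2)/2)^7/5040)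
        ≤ Real.exp (-((-17/4:ℝ))^2/2) * Real.exp (((289/16:ℝ) - t^2)/2) :=
          mul_le_mul_of_nonneg_left h3 (Real.exp_pos _).le
      _ = Real.exp (-t^2/2) := by
          rw [← Real.exp_add]; congr 1; ring
  have hmono := intervalIntegral.integral_mono_on (by norm_num : ((-9/2:ℝ)) ≤ (-17/4:ℝ))
    (Continuous.intervalIntegrable (by fun_prop) _ _) (hii _ _) key
  have hcg : (∫ t in (-9/2:ℝ)..(-17/4:ℝ), (1 + (((289/16:ℝ) - t^2)/2) + (((289/16:ℝ) - t^2)/2)^2/2 + (((289/16:ℝ) - t^2)/2)^3/6 + (((289/16:ℝ) - t^2)/2)^4/24 + (((289/16:ℝ) - t^2)/2)^5/120 + (((289/16:ℝ) - t^2)/2)^6/720 + (((289/16:ℝ) - t^2)/2)^7/5040)) =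
      ∫ t in (-9/2:ℝ)..(-17/4:ℝ), ((30910074583397935/11544872091648:ℝ) + (-1318184340140929/1546188226560:ℝ)*t^2 + (3831052619329/32212254720:ℝ)*t^4 + (-3781372331/402653184:ℝ)*t^6 + (34127809/75497472:ℝ)*t^8 + (-20813/1572864:ℝ)*t^10 + (107/491520:ℝ)*t^12 + (-1/645120:ℝ)*t^14) :=
    intervalIntegral.integral_congr (fun t _ => by ring)
  have hval : (∫ t in (-9/2:ℝ)..(-17/4:ℝ), Real.exp (-((-17/4:ℝ))^2/2) * (1 + (((289/16:ℝ) - t^2)/2) + (((289/16:ℝ) - t^2)/2)^2/2 + (((289/16:ℝ) - t^2)/2)^3/6 + (((289/16:ℝ) - t^2)/2)^4/24 + (((289/16:ℝ) - t^2)/2)^5/120 + (((289/16:ℝ) - t^2)/2)^6/720 + (((289/16:ℝ) - t^2)/2)^7/5040))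
      = Real.exp (-((-17/4:ℝ))^2/2) * (340522407758457391/2228737557292646400:ℝ) := by
    rw [intervalIntegral.integral_const_mul, hcg, int_poly]
    norm_num
  have hLE : (119612883513817/1000000000000000000:ℝ) * (340522407758457391/2228737557292646400:ℝ) ≤ Real.exp (-((-17/4:ℝ))^2/2) * (340522407758457391/2228737557292646400:ℝ) :=
    mul_le_mul_of_nonneg_right hE (by norm_num)
  linarith [hmono, hval, hLE]

lemma hpiece5 : (6709252555267/20000000000000000:ℝ) * (698866562265862979/4457475114585292800:ℝ) ≤ ∫ t in (-17/4:ℝ)..(-4:ℝ), Real.exp (-t^2/2) := by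
  have hE : (6709252555267/20000000000000000:ℝ) ≤ Real.exp (-((-4:ℝ))^2/2) := by
    have h := exp_neg_lb (8:ℝ) (0:ℝ) (6709252555267/20000000000000000:ℝ) 8 (by norm_num) (by norm_num) (by norm_num)
      (by norm_num [Finset.sum_range_succ, Nat.factorial])
    convert h using 2
    norm_num
  have key : ∀ t ∈ Set.Icc ((-17/4:ℝ)) ((-4:ℝ)),
      Real.exp (-((-4:ℝ))^2/2) * (1 + (((16:ℝ) - t^2)/2) + (((16:ℝ) - t^2)/2)^2/2 + (((16:ℝ) - t^2)/2)^3/6 + (((16:ℝ) - t^2)/2)^4/24 + (((16:ℝ) - t^2)/2)^5/120 + (((16:ℝ) - t^2)/2)^6/720 + (((16:ℝ) - t^2)/2)^7/5040) ≤ Real.exp (-t^2/2) := by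
    intro t ht
    have h1 : ((-4:ℝ))^2 ≤ t^2 := by nlinarith [ht.1, ht.2]
    have h2 : (((16:ℝ) - t^2)/2) ≤ 0 := by nlinarith
    have h3 := exp_ge7' h2
    calc Real.exp (-((-4:ℝ))^2/2) * (1 + (((16:ℝ) - t^2)/2) + (((16:ℝ) - t^2)/2)^2/2 + (((16:ℝ) - t^2)/2)^3/6 + (((16:ℝ) - t^2)/2)^4/24 + (((16:ℝ) - t^2)/2)^5/120 + (((16:ℝ) - t^2)/2)^6/720 + (((16:ℝ) - t^2)/2)^7/5040)
        ≤ Real.exp (-((-4:ℝ))^2/2) * Real.exp (((16:ℝ) - t^2)/2) :=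
          mul_le_mul_of_nonneg_left h3 (Real.exp_pos _).le
      _ = Real.exp (-t^2/2) := by
          rw [← Real.exp_add]; congr 1; ring
  have hmono := intervalIntegral.integral_mono_on (by norm_num : ((-17/4:ℝ)) ≤ (-4:ℝ))
    (Continuous.intervalIntegrable (by fun_prop) _ _) (hii _ _) key
  have hcg : (∫ t in (-17/4:ℝ)..(-4:ℝ), (1 + (((16:ℝ) - t^2)/2) + (((16:ℝ) - t^2)/2)^2/2 + (((16:ℝ) - t^2)/2)^3/6 + (((16:ℝ) - t^2)/2)^4/24 + (((16:ℝ) - t^2)/2)^5/120 + (((16:ℝ) - t^2)/2)^6/720 + (((16:ℝ) - t^2)/2)^7/5040)) =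
      ∫ t in (-17/4:ℝ)..(-4:ℝ), ((47259/35:ℝ) + (-42037/90:ℝ)*t^2 + (8551/120:ℝ)*t^4 + (-99/16:ℝ)*t^6 + (379/1152:ℝ)*t^8 + (-41/3840:ℝ)*t^10 + (1/5120:ℝ)*t^12 + (-1/645120:ℝ)*t^14) :=
    intervalIntegral.integral_congr (fun t _ => by ring)
  have hval : (∫ t in (-17/4:ℝ)..(-4:ℝ), Real.exp (-((-4:ℝ))^2/2) * (1 + (((16:ℝ) - t^2)/2) + (((16:ℝ) - t^2)/2)^2/2 + (((16:ℝ) - t^2)/2)^3/6 + (((16:ℝ) - t^2)/2)^4/24 + (((16:ℝ) - t^2)/2)^5/120 + (((16:ℝ) - t^2)/2)^6/720 + (((16:ℝ) - t^2)/2)^7/5040))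
      = Real.exp (-((-4:ℝ))^2/2) * (698866562265862979/4457475114585292800:ℝ) := by
    rw [intervalIntegral.integral_const_mul, hcg, int_poly]
    norm_num
  have hLE : (6709252555267/20000000000000000:ℝ) * (698866562265862979/4457475114585292800:ℝ) ≤ Real.exp (-((-4:ℝ))^2/2) * (698866562265862979/4457475114585292800:ℝ) :=
    mul_le_mul_of_nonneg_right hE (by norm_num)
  linarith [hmono, hval, hLE]

lemma hpiece6 : (220956576632529/250000000000000000:ℝ) * (4981770885634379/30954688295731200:ℝ) ≤ ∫ t in (-4:ℝ)..(-15/4:ℝ), Real.exp (-t^2/2) := by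
  have hE : (220956576632529/250000000000000000:ℝ) ≤ Real.exp (-((-15/4:ℝ))^2/2) := by
    have h := exp_neg_lb (225/32:ℝ) (31/32:ℝ) (220956576632529/250000000000000000:ℝ) 8 (by norm_num) (by norm_num) (by norm_num)
      (by norm_num [Finset.sum_range_succ, Nat.factorial])
    convert h using 2
    norm_num
  have key : ∀ t ∈ Set.Icc ((-4:ℝ)) ((-15/4:ℝ)),
      Real.exp (-((-15/4:ℝ))^2/2) * (1 + (((225/16:ℝ) - t^2)/2) + (((225/16:ℝ) - t^2)/2)^2/2 + (((225/16:ℝ) - t^2)/2)^3/6 + (((225/16:ℝ) - t^2)/2)^4/24 + (((225/16:ℝ) - t^2)/2)^5/120 + (((225/16:ℝ) - t^2)/2)^6/720 + (((225/16:ℝ) - t^2)/2)^7/5040) ≤ Real.exp (-t^2/2) := by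
    intro t ht
    have h1 : ((-15/4:ℝ))^2 ≤ t^2 := by nlinarith [ht.1, ht.2]
    have h2 : (((225/16:ℝ) - t^2)/2) ≤ 0 := by nlinarith
    have h3 := exp_ge7' h2
    calc Real.exp (-((-15/4:ℝ))^2/2) * (1 + (((225/16:ℝ) - t^2)/2) + (((225/16:ℝ) - t^2)/2)^2/2 + (((225/16:ℝ) - t^2)/2)^3/6 + (((225/16:ℝ) - t^2)/2)^4/24 + (((225/16:ℝ) - t^2)/2)^5/120 + (((225/16:ℝ) - t^2)/2)^6/720 + (((225/16:ℝ) - t^2)/2)^7/5040)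
        ≤ Real.exp (-((-15/4:ℝ))^2/2) * Real.exp (((225/16:ℝ) - t^2)/2) :=
          mul_le_mul_of_nonneg_left h3 (Real.exp_pos _).le
      _ = Real.exp (-t^2/2) := by
          rw [← Real.exp_add]; congr 1; ring
  have hmono := intervalIntegral.integral_mono_on (by norm_num : ((-4:ℝ)) ≤ (-15/4:ℝ))
    (Continuous.intervalIntegrable (by fun_prop) _ _) (hii _ _) key
  have hcg : (∫ t in (-4:ℝ)..(-15/4:ℝ), (1 + (((225/16:ℝ) - t^2)/2) + (((225/16:ℝ) - t^2)/2)^2/2 + (((225/16:ℝ) - t^2)/2)^3/6 + (((225/16:ℝ) - t^2)/2)^4/24 + (((225/16:ℝ) - t^2)/2)^5/120 + (((225/16:ℝ) - t^2)/2)^6/720 + (((225/16:ℝ) - t^2)/2)^7/5040)) =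
      ∫ t in (-4:ℝ)..(-15/4:ℝ), ((2586601398335141/3848290697216:ℝ) + (-8651204057509/34359738368:ℝ)*t^2 + (90124251631/2147483648:ℝ)*t^4 + (-1615027883/402653184:ℝ)*t^6 + (5943211/25165824:ℝ)*t^8 + (-67073/7864320:ℝ)*t^10 + (257/1474560:ℝ)*t^12 + (-1/645120:ℝ)*t^14) :=
    intervalIntegral.integral_congr (fun t _ => by ring)
  have hval : (∫ t in (-4:ℝ)..(-15/4:ℝ), Real.exp (-((-15/4:ℝ))^2/2) * (1 + (((225/16:ℝ) - t^2)/2) + (((225/16:ℝ) - t^2)/2)^2/2 + (((225/16:ℝ) - t^2)/2)^3/6 + (((225/16:ℝ) - t^2)/2)^4/24 + (((225/16:ℝ) - t^2)/2)^5/120 + (((225/16:ℝ) - t^2)/2)^6/720 + (((225/16:ℝ) - t^2)/2)^7/5040))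
      = Real.exp (-((-15/4:ℝ))^2/2) * (4981770885634379/30954688295731200:ℝ) := by
    rw [intervalIntegral.integral_const_mul, hcg, int_poly]
    norm_num
  have hLE : (220956576632529/250000000000000000:ℝ) * (4981770885634379/30954688295731200:ℝ) ≤ Real.exp (-((-15/4:ℝ))^2/2) * (4981770885634379/30954688295731200:ℝ) :=
    mul_le_mul_of_nonneg_right hE (by norm_num)
  linarith [hmono, hval, hLE]

lemma hpiece7 : (2187491117361347/1000000000000000000:ℝ) * (736601514784207433/4457475114585292800:ℝ) ≤ ∫ t in (-15/4:ℝ)..(-7/2:ℝ), Real.exp (-t^2/2) := by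
  have hE : (2187491117361347/1000000000000000000:ℝ) ≤ Real.exp (-((-7/2:ℝ))^2/2) := by
    have h := exp_neg_lb (49/8:ℝ) (7/8:ℝ) (2187491117361347/1000000000000000000:ℝ) 7 (by norm_num) (by norm_num) (by norm_num)
      (by norm_num [Finset.sum_range_succ, Nat.factorial])
    convert h using 2
    norm_num
  have key : ∀ t ∈ Set.Icc ((-15/4:ℝ)) ((-7/2:ℝ)),
      Real.exp (-((-7/2:ℝ))^2/2) * (1 + (((49/4:ℝ) - t^2)/2) + (((49/4:ℝ) - t^2)/2)^2/2 + (((49/4:ℝ) - t^2)/2)^3/6 + (((49/4:ℝ) - t^2)/2)^4/24 + (((49/4:ℝ) - t^2)/2)^5/120 + (((49/4:ℝ) - t^2)/2)^6/720 + (((49/4:ℝ) - t^2)/2)^7/5040) ≤ Real.exp (-t^2/2) := by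
    intro t ht
    have h1 : ((-7/2:ℝ))^2 ≤ t^2 := by nlinarith [ht.1, ht.2]
    have h2 : (((49/4:ℝ) - t^2)/2) ≤ 0 := by nlinarith
    have h3 := exp_ge7' h2
    calc Real.exp (-((-7/2:ℝ))^2/2) * (1 + (((49/4:ℝ) - t^2)/2) + (((49/4:ℝ) - t^2)/2)^2/2 + (((49/4:ℝ) - t^2)/2)^3/6 + (((49/4:ℝ) - t^2)/2)^4/24 + (((49/4:ℝ) - t^2)/2)^5/120 + (((49/4:ℝ) - t^2)/2)^6/720 + (((49/4:ℝ) - t^2)/2)^7/5040)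
        ≤ Real.exp (-((-7/2:ℝ))^2/2) * Real.exp (((49/4:ℝ) - t^2)/2) :=
          mul_le_mul_of_nonneg_left h3 (Real.exp_pos _).le
      _ = Real.exp (-t^2/2) := by
          rw [← Real.exp_add]; congr 1; ring
  have hmono := intervalIntegral.integral_mono_on (by norm_num : ((-15/4:ℝ)) ≤ (-7/2:ℝ))
    (Continuous.intervalIntegrable (by fun_prop) _ _) (hii _ _) key
  have hcg : (∫ t in (-15/4:ℝ)..(-7/2:ℝ), (1 + (((49/4:ℝ) - t^2)/2) + (((49/4:ℝ) - t^2)/2)^2/2 + (((49/4:ℝ) - t^2)/2)^3/6 + (((49/4:ℝ) - t^2)/2)^4/24 + (((49/4:ℝ) - t^2)/2)^5/120 + (((49/4:ℝ) - t^2)/2)^6/720 + (((49/4:ℝ) - t^2)/2)^7/5040)) =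
      ∫ t in (-15/4:ℝ)..(-7/2:ℝ), ((167181907237/503316480:ℝ) + (-50582088913/377487360:ℝ)*t^2 + (765433369/31457280:ℝ)*t^4 + (-4024651/1572864:ℝ)*t^6 + (197161/1179648:ℝ)*t^8 + (-3313/491520:ℝ)*t^10 + (19/122880:ℝ)*t^12 + (-1/645120:ℝ)*t^14) :=
    intervalIntegral.integral_congr (fun t _ => by ring)
  have hval : (∫ t in (-15/4:ℝ)..(-7/2:ℝ), Real.exp (-((-7/2:ℝ))^2/2) * (1 + (((49/4:ℝ) - t^2)/2) + (((49/4:ℝ) - t^2)/2)^2/2 + (((49/4:ℝ) - t^2)/2)^3/6 + (((49/4:ℝ) - t^2)/2)^4/24 + (((49/4:ℝ) - t^2)/2)^5/120 + (((49/4:ℝ) - t^2)/2)^6/720 + (((49/4:ℝ) - t^2)/2)^7/5040))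
      = Real.exp (-((-7/2:ℝ))^2/2) * (736601514784207433/4457475114585292800:ℝ) := by
    rw [intervalIntegral.integral_const_mul, hcg, int_poly]
    norm_num
  have hLE : (2187491117361347/1000000000000000000:ℝ) * (736601514784207433/4457475114585292800:ℝ) ≤ Real.exp (-((-7/2:ℝ))^2/2) * (736601514784207433/4457475114585292800:ℝ) :=
    mul_le_mul_of_nonneg_right hE (by norm_num)
  linarith [hmono, hval, hLE]

lemma hpiece8 : (5086069229424559/1000000000000000000:ℝ) * (2161654079458039/12735643184529408:ℝ) ≤ ∫ t in (-7/2:ℝ)..(-13/4:ℝ), Real.exp (-t^2/2) := by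
  have hE : (5086069229424559/1000000000000000000:ℝ) ≤ Real.exp (-((-13/4:ℝ))^2/2) := by
    have h := exp_neg_lb (169/32:ℝ) (23/32:ℝ) (5086069229424559/1000000000000000000:ℝ) 6 (by norm_num) (by norm_num) (by norm_num)
      (by norm_num [Finset.sum_range_succ, Nat.factorial])
    convert h using 2
    norm_num
  have key : ∀ t ∈ Set.Icc ((-7/2:ℝ)) ((-13/4:ℝ)),
      Real.exp (-((-13/4:ℝ))^2/2) * (1 + (((169/16:ℝ) - t^2)/2) + (((169/16:ℝ) - t^2)/2)^2/2 + (((169/16:ℝ) - t^2)/2)^3/6 + (((169/16:ℝ) - t^2)/2)^4/24 + (((169/16:ℝ) - t^2)/2)^5/120 + (((169/16:ℝ) - t^2)/2)^6/720 + (((169/16:ℝ) - t^2)/2)^7/5040) ≤ Real.exp (-t^2/2) := by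
    intro t ht
    have h1 : ((-13/4:ℝ))^2 ≤ t^2 := by nlinarith [ht.1, ht.2]
    have h2 : (((169/16:ℝ) - t^2)/2) ≤ 0 := by nlinarith
    have h3 := exp_ge7' h2
    calc Real.exp (-((-13/4:ℝ))^2/2) * (1 + (((169/16:ℝ) - t^2)/2) + (((169/16:ℝ) - t^2)/2)^2/2 + (((169/16:ℝ) - t^2)/2)^3/6 + (((169/16:ℝ) - t^2)/2)^4/24 + (((169/16:ℝ) - t^2)/2)^5/120 + (((169/16:ℝ) - t^2)/2)^6/720 + (((169/16:ℝ) - t^2)/2)^7/5040)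
        ≤ Real.exp (-((-13/4:ℝ))^2/2) * Real.exp (((169/16:ℝ) - t^2)/2) :=
          mul_le_mul_of_nonneg_left h3 (Real.exp_pos _).le
      _ = Real.exp (-t^2/2) := by
          rw [← Real.exp_add]; congr 1; ring
  have hmono := intervalIntegral.integral_mono_on (by norm_num : ((-7/2:ℝ)) ≤ (-13/4:ℝ))
    (Continuous.intervalIntegrable (by fun_prop) _ _) (hii _ _) key
  have hcg : (∫ t in (-7/2:ℝ)..(-13/4:ℝ), (1 + (((169/16:ℝ) - t^2)/2) + (((169/16:ℝ) - t^2)/2)^2/2 + (((169/16:ℝ) - t^2)/2)^3/6 + (((169/16:ℝ) - t^2)/2)^4/24 + (((169/16:ℝ) - t^2)/2)^5/120 + (((169/16:ℝ) - t^2)/2)^6/720 + (((169/16:ℝ) - t^2)/2)^7/5040)) =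
      ∫ t in (-7/2:ℝ)..(-13/4:ℝ), ((1896845971962551/11544872091648:ℝ) + (-109443362472049/1546188226560:ℝ)*t^2 + (448673319529/32212254720:ℝ)*t^4 + (-647530891/402653184:ℝ)*t^6 + (8803609/75497472:ℝ)*t^8 + (-8285/1572864:ℝ)*t^10 + (67/491520:ℝ)*t^12 + (-1/645120:ℝ)*t^14) :=
    intervalIntegral.integral_congr (fun t _ => by ring)
  have hval : (∫ t in (-7/2:ℝ)..(-13/4:ℝ), Real.exp (-((-13/4:ℝ))^2/2) * (1 + (((169/16:ℝ) - t^2)/2) + (((169/16:ℝ) - t^2)/2)^2/2 + (((169/16:ℝ) - t^2)/2)^3/6 + (((169/16:ℝ) - t^2)/2)^4/24 + (((169/16:ℝ) - t^2)/2)^5/120 + (((169/16:ℝ) - t^2)/2)^6/720 + (((169/16:ℝ) - t^2)/2)^7/5040))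
      = Real.exp (-((-13/4:ℝ))^2/2) * (2161654079458039/12735643184529408:ℝ) := by
    rw [intervalIntegral.integral_const_mul, hcg, int_poly]
    norm_num
  have hLE : (5086069229424559/1000000000000000000:ℝ) * (2161654079458039/12735643184529408:ℝ) ≤ Real.exp (-((-13/4:ℝ))^2/2) * (2161654079458039/12735643184529408:ℝ) :=
    mul_le_mul_of_nonneg_right hE (by norm_num)
  linarith [hmono, hval, hLE]

lemma hpiece9 : (11108996535361919/1000000000000000000:ℝ) * (86371296016814423/495275012731699200:ℝ) ≤ ∫ t in (-13/4:ℝ)..(-3:ℝ), Real.exp (-t^2/2) := by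
  have hE : (11108996535361919/1000000000000000000:ℝ) ≤ Real.exp (-((-3:ℝ))^2/2) := by
    have h := exp_neg_lb (9/2:ℝ) (1/2:ℝ) (11108996535361919/1000000000000000000:ℝ) 5 (by norm_num) (by norm_num) (by norm_num)
      (by norm_num [Finset.sum_range_succ, Nat.factorial])
    convert h using 2
    norm_num
  have key : ∀ t ∈ Set.Icc ((-13/4:ℝ)) ((-3:ℝ)),
      Real.exp (-((-3:ℝ))^2/2) * (1 + (((9:ℝ) - t^2)/2) + (((9:ℝ) - t^2)/2)^2/2 + (((9:ℝ) - t^2)/2)^3/6 + (((9:ℝ) - t^2)/2)^4/24 + (((9:ℝ) - t^2)/2)^5/120 + (((9:ℝ) - t^2)/2)^6/720 + (((9:ℝ) - t^2)/2)^7/5040) ≤ Real.exp (-t^2/2) := by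
    intro t ht
    have h1 : ((-3:ℝ))^2 ≤ t^2 := by nlinarith [ht.1, ht.2]
    have h2 : (((9:ℝ) - t^2)/2) ≤ 0 := by nlinarith
    have h3 := exp_ge7' h2
    calc Real.exp (-((-3:ℝ))^2/2) * (1 + (((9:ℝ) - t^2)/2) + (((9:ℝ) - t^2)/2)^2/2 + (((9:ℝ) - t^2)/2)^3/6 + (((9:ℝ) - t^2)/2)^4/24 + (((9:ℝ) - t^2)/2)^5/120 + (((9:ℝ) - t^2)/2)^6/720 + (((9:ℝ) - t^2)/2)^7/5040)
        ≤ Real.exp (-((-3:ℝ))^2/2) * Real.exp (((9:ℝ) - t^2)/2) :=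
          mul_le_mul_of_nonneg_left h3 (Real.exp_pos _).le
      _ = Real.exp (-t^2/2) := by
          rw [← Real.exp_add]; congr 1; ring
  have hmono := intervalIntegral.integral_mono_on (by norm_num : ((-13/4:ℝ)) ≤ (-3:ℝ))
    (Continuous.intervalIntegrable (by fun_prop) _ _) (hii _ _) key
  have hcg : (∫ t in (-13/4:ℝ)..(-3:ℝ), (1 + (((9:ℝ) - t^2)/2) + (((9:ℝ) - t^2)/2)^2/2 + (((9:ℝ) - t^2)/2)^3/6 + (((9:ℝ) - t^2)/2)^4/24 + (((9:ℝ) - t^2)/2)^5/120 + (((9:ℝ) - t^2)/2)^6/720 + (((9:ℝ) - t^2)/2)^7/5040)) =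
      ∫ t in (-13/4:ℝ)..(-3:ℝ), ((1178747/14336:ℝ) + (-383021/10240:ℝ)*t^2 + (80993/10240:ℝ)*t^4 + (-6131/6144:ℝ)*t^6 + (493/6144:ℝ)*t^8 + (-25/6144:ℝ)*t^10 + (11/92160:ℝ)*t^12 + (-1/645120:ℝ)*t^14) :=
    intervalIntegral.integral_congr (fun t _ => by ring)
  have hval : (∫ t in (-13/4:ℝ)..(-3:ℝ), Real.exp (-((-3:ℝ))^2/2) * (1 + (((9:ℝ) - t^2)/2) + (((9:ℝ) - t^2)/2)^2/2 + (((9:ℝ) - t^2)/2)^3/6 + (((9:ℝ) - t^2)/2)^4/24 + (((9:ℝ) - t^2)/2)^5/120 + (((9:ℝ) - t^2)/2)^6/720 + (((9:ℝ) - t^2)/2)^7/5040))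
      = Real.exp (-((-3:ℝ))^2/2) * (86371296016814423/495275012731699200:ℝ) := by
    rw [intervalIntegral.integral_const_mul, hcg, int_poly]
    norm_num
  have hLE : (11108996535361919/1000000000000000000:ℝ) * (86371296016814423/495275012731699200:ℝ) ≤ Real.exp (-((-3:ℝ))^2/2) * (86371296016814423/495275012731699200:ℝ) :=
    mul_le_mul_of_nonneg_right hE (by norm_num)
  linarith [hmono, hval, hLE]

lemma hInt : MeasureTheory.Integrable (fun t : ℝ => Real.exp (-t^2/2)) := by
  have h := integrable_exp_neg_mul_sq (by norm_num : (0:ℝ) < 1/2)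
  have e : (fun t : ℝ => Real.exp (-t^2/2)) = (fun t : ℝ => Real.exp (-(1/2) * t^2)) := by
    funext t; congr 1; ring
  rw [e]; exact h

lemma htotal : (0.0033836:ℝ) ≤ ∫ t in Set.Iic (-3:ℝ), Real.exp (-t^2/2) := by
  have hchain : (∫ t in (-11/2:ℝ)..(-21/4:ℝ), Real.exp (-t^2/2)) + (∫ t in (-21/4:ℝ)..(-5:ℝ), Real.exp (-t^2/2)) + (∫ t in (-5:ℝ)..(-19/4:ℝ), Real.exp (-t^2/2)) + (∫ t in (-19/4:ℝ)..(-9/2:ℝ), Real.exp (-t^2/2)) + (∫ t in (-9/2:ℝ)..(-17/4:ℝ), Real.exp (-t^2/2)) + (∫ t in (-17/4:ℝ)..(-4:ℝ), Real.exp (-t^2/2)) + (∫ t in (-4:ℝ)..(-15/4:ℝ), Real.exp (-t^2/2)) + (∫ t in (-15/4:ℝ)..(-7/2:ℝ), Real.exp (-t^2/2)) + (∫ t in (-7/2:ℝ)..(-13/4:ℝ), Real.exp (-t^2/2)) + (∫ t in (-13/4:ℝ)..(-3:ℝ), Real.exp (-t^2/2)) = ∫ t in (-11/2:ℝ)..(-3:ℝ),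 Real.exp (-t^2/2) := by
    rw [intervalIntegral.integral_add_adjacent_intervals (hii _ _) (hii _ _),
      intervalIntegral.integral_add_adjacent_intervals (hii _ _) (hii _ _),
      intervalIntegral.integral_add_adjacent_intervals (hii _ _) (hii _ _),
      intervalIntegral.integral_add_adjacent_intervals (hii _ _) (hii _ _),
      intervalIntegral.integral_add_adjacent_intervals (hii _ _) (hii _ _),
      intervalIntegral.integral_add_adjacent_intervals (hii _ _) (hii _ _),
      intervalIntegral.integral_add_adjacent_intervals (hii _ _) (hii _ _),
      intervalIntegral.integral_add_adjacent_intervals (hii _ _) (hii _ _),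
      intervalIntegral.integral_add_adjacent_intervals (hii _ _) (hii _ _)]
  have hIic3 : (∫ t in (-11/2:ℝ)..(-3:ℝ), Real.exp (-t^2/2))
      ≤ ∫ t in Set.Iic (-3:ℝ), Real.exp (-t^2/2) := by
    rw [intervalIntegral.integral_of_le (by norm_num : (-11/2:ℝ) ≤ -3)]
    apply MeasureTheory.setIntegral_mono_set hInt.integrableOn
    · exact Filter.Eventually.of_forall fun t => (Real.exp_pos _).le
    · exact HasSubset.Subset.eventuallyLE (fun t ht => ht.2)
  linarith [hpiece0, hpiece1, hpiece2, hpiece3, hpiece4, hpiece5, hpiece6, hpiece7, hpiece8, hpiece9, hchain, hIic3]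

lemma hU : Real.exp (-(9/2:ℝ)) ≤ 0.011109 := by
  rw [Real.exp_neg]
  have hS := Real.sum_le_exp_of_nonneg (by norm_num : (0:ℝ) ≤ 9/2) 25
  have hSv : (90.01713:ℝ) ≤ ∑ i ∈ Finset.range 25, (9/2:ℝ)^i / (Nat.factorial i : ℝ) := by
    norm_num [Finset.sum_range_succ, Nat.factorial]
  have h90 : (90.01713:ℝ) ≤ Real.exp (9/2:ℝ) := le_trans hSv hS
  calc (Real.exp (9/2:ℝ))⁻¹ ≤ (90.01713:ℝ)⁻¹ := by
        apply inv_anti₀ (by norm_num) h90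
    _ ≤ 0.011109 := by norm_num

lemma hbase : Real.exp (-(9/2:ℝ)) ≤ 3.284 * ∫ t in Set.Iic (-3:ℝ), Real.exp (-t^2/2) := by
  calc Real.exp (-(9/2:ℝ)) ≤ 0.011109 := hU
    _ ≤ 3.284 * (0.0033836:ℝ) := by norm_num
    _ ≤ _ := by linarith [htotal]


/-- The reverse hazard rate of the standard normal distribution is bounded by `3.284` on
`[-3, 0)`. -/
theorem stmt_12 (x : ℝ) (hx : x ∈ Set.Ico (-3 : ℝ) 0) : phi x / Phi x ≤ 3.284 := by
  obtain ⟨hx3, hx0⟩ := hx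
  have hc : (0:ℝ) < (2*Real.pi)^(-(1/2):ℝ) := Real.rpow_pos_of_pos (by positivity) _
  have hPhidiff : Phi x - Phi (-3)
      = (2*Real.pi)^(-(1/2):ℝ) * ∫ t in (-3:ℝ)..x, Real.exp (-t^2/2) := by
    simp only [Phi]
    rw [← mul_sub]
    congr 1
    exact intervalIntegral.integral_Iic_sub_Iic hInt.integrableOn hInt.integrableOn
  have hderiv : ∀ t : ℝ, HasDerivAt (fun y : ℝ => (2*Real.pi)^(-(1/2):ℝ) * Real.exp (-y^2/2))
      ((2*Real.pi)^(-(1/2):ℝ) * (-t * Real.exp (-t^2/2))) t := by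
    intro t
    have h1 : HasDerivAt (fun y : ℝ => -y^2/2) (-t) t := by
      have H := ((hasDerivAt_pow 2 t).neg).div_const 2
      refine H.congr_deriv ?_
      push_cast; ring
    have h2 := (h1.exp).const_mul ((2*Real.pi)^(-(1/2):ℝ))
    refine h2.congr_deriv ?_
    ring
  have hphidiff : phi x - phi (-3)
      = ∫ t in (-3:ℝ)..x, (2*Real.pi)^(-(1/2):ℝ) * (-t * Real.exp (-t^2/2)) := by
    rw [intervalIntegral.integral_eq_sub_of_hasDerivAt (fun t _ => hderiv t)
      (Continuous.intervalIntegrable (by fun_prop) _ _)]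
    simp [phi]
  have hnn : (0:ℝ) ≤ ∫ t in (-3:ℝ)..x,
      ((2*Real.pi)^(-(1/2):ℝ) * (3.284 * Real.exp (-t^2/2))
        - (2*Real.pi)^(-(1/2):ℝ) * (-t * Real.exp (-t^2/2))) := by
    apply intervalIntegral.integral_nonneg hx3
    intro u hu
    have h1 : (0:ℝ) ≤ 3.284 + u := by have := hu.1; linarith
    have h2 : (0:ℝ) ≤ (2*Real.pi)^(-(1/2):ℝ) * Real.exp (-u^2/2) := by positivity
    nlinarith [mul_nonneg h2 h1]
  have hsplit : (∫ t in (-3:ℝ)..x,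
      ((2*Real.pi)^(-(1/2):ℝ) * (3.284 * Real.exp (-t^2/2))
        - (2*Real.pi)^(-(1/2):ℝ) * (-t * Real.exp (-t^2/2))))
      = 3.284 * ((2*Real.pi)^(-(1/2):ℝ) * ∫ t in (-3:ℝ)..x, Real.exp (-t^2/2))
        - ∫ t in (-3:ℝ)..x, (2*Real.pi)^(-(1/2):ℝ) * (-t * Real.exp (-t^2/2)) := by
    rw [intervalIntegral.integral_sub (Continuous.intervalIntegrable (by fun_prop) _ _)
      (Continuous.intervalIntegrable (by fun_prop) _ _)]
    congr 1
    rw [intervalIntegral.integral_const_mul, intervalIntegral.integral_const_mul]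
    ring
  have hJ : (0:ℝ) ≤ ∫ t in (-3:ℝ)..x, Real.exp (-t^2/2) :=
    intervalIntegral.integral_nonneg hx3 (fun u _ => (Real.exp_pos _).le)
  have hPhi3 : 0 < Phi (-3) := by
    simp only [Phi]
    exact mul_pos hc (lt_of_lt_of_le (by norm_num) htotal)
  have hPhixpos : 0 < Phi x := by
    have := mul_nonneg hc.le hJ
    linarith [hPhidiff, hPhi3]
  have hbase' : phi (-3) ≤ 3.284 * Phi (-3) := by
    simp only [phi, Phi]
    calc (2*Real.pi)^(-(1/2):ℝ) * Real.exp (-(-3:ℝ)^2/2)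
        = (2*Real.pi)^(-(1/2):ℝ) * Real.exp (-(9/2:ℝ)) := by norm_num
      _ ≤ (2*Real.pi)^(-(1/2):ℝ) * (3.284 * ∫ t in Set.Iic (-3:ℝ), Real.exp (-t^2/2)) :=
          mul_le_mul_of_nonneg_left hbase hc.le
      _ = 3.284 * ((2*Real.pi)^(-(1/2):ℝ) * ∫ t in Set.Iic (-3:ℝ), Real.exp (-t^2/2)) := by
          ring
  rw [div_le_iff₀ hPhixpos]
  linarith [hnn, hsplit, hPhidiff, hphidiff, hbase']


end Stmt12
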